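/- Let K be a field and let H11 (n1×m1), H12 (n1×m2), H21 (n2×m1), H22 (n2×m2) be matrices over K satisfying rank([H11 | H12]) = n1, rank([H21 | H22]) = n2, rank([H11; H21]) = m1, and rank([H12; H22]) = m2. Let B = [[H11, H12],[H21, 0]] and C = [[H21, H22],[0, H12]]. If R1, R2 are nonnegative real numbers with R1 ≤ n1 − rank(H12) and R2 ≤ n2 − rank(H21), then all of the following hold: R1 ≤ rank(H11); R2 ≤ rank(H22); R1+R2 ≤ n1+m2−rank(H12); R1+R2 ≤ n2+m1−rank(H21); R1+R2 ≤ rank(B)+rank(C)−rank(H12)−rank(H21); 2R1+R2 ≤ n1+m1+rank(C)−rank(H12)−rank(H21); and R1+2R2 ≤ n2+m2+rank(B)−rank(H12)−rank(H21). -/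

import Mathlib

open Matrix

set_option linter.unusedSectionVars false

section helpers

variable {K : Type*} [Field K] {n m1 m2 : Type*} [Fintype n] [Fintype m1] [Fintype m2]

lemma range_fromColumns_eq (A : Matrix n m1 K) (B : Matrix n m2 K) :
    LinearMap.range (fromCols A B).mulVecLin =
      LinearMap.range A.mulVecLin ⊔ LinearMap.range B.mulVecLin := by
  apply le_antisymm
  · rintro y ⟨x, rfl⟩
    rw [mulVecLin_apply, ← Sum.elim_comp_inl_inr x, fromCols_mulVec_sumElim]
    exact Submodule.add_mem_sup ⟨_, rfl⟩ ⟨_, rfl⟩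
  · rw [sup_le_iff]
    constructor
    · rintro y ⟨x, rfl⟩
      refine ⟨Sum.elim x 0, ?_⟩
      rw [mulVecLin_apply, mulVecLin_apply, fromCols_mulVec_sumElim, mulVec_zero, add_zero]
    · rintro y ⟨x, rfl⟩
      refine ⟨Sum.elim 0 x, ?_⟩
      rw [mulVecLin_apply, mulVecLin_apply, fromCols_mulVec_sumElim, mulVec_zero, zero_add]

lemma rank_fromColumns_le_add (A : Matrix n m1 K) (B : Matrix n m2 K) :
    (fromCols A B).rank ≤ A.rank + B.rank := by
  rw [Matrix.rank, range_fromColumns_eq]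
  exact Submodule.finrank_add_le_finrank_add_finrank _ _

lemma rank_left_le_fromColumns (A : Matrix n m1 K) (B : Matrix n m2 K) :
    A.rank ≤ (fromCols A B).rank := by
  rw [Matrix.rank, Matrix.rank, range_fromColumns_eq]
  exact Submodule.finrank_mono le_sup_left

lemma rank_right_le_fromColumns (A : Matrix n m1 K) (B : Matrix n m2 K) :
    B.rank ≤ (fromCols A B).rank := by
  rw [Matrix.rank, Matrix.rank, range_fromColumns_eq]
  exact Submodule.finrank_mono le_sup_right

lemma rank_top_le_fromRows {p : Type*} [Fintype p] (A : Matrix m1 p K) (B : Matrix m2 p K) :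
    A.rank ≤ (fromRows A B).rank := by
  rw [← rank_transpose A, ← rank_transpose (fromRows A B), transpose_fromRows]
  exact rank_left_le_fromColumns _ _

lemma rank_bot_le_fromRows {p : Type*} [Fintype p] (A : Matrix m1 p K) (B : Matrix m2 p K) :
    B.rank ≤ (fromRows A B).rank := by
  rw [← rank_transpose B, ← rank_transpose (fromRows A B), transpose_fromRows]
  exact rank_right_le_fromColumns _ _

end helpers

/-- Region 1 of Huang et al. lies inside the capacity region of the two-user linear
deterministic interference channel. -/
theorem region1_subset_capacity {K : Type*} [Field K] {n1 n2 m1 m2 : ℕ}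
    (H11 : Matrix (Fin n1) (Fin m1) K) (H12 : Matrix (Fin n1) (Fin m2) K)
    (H21 : Matrix (Fin n2) (Fin m1) K) (H22 : Matrix (Fin n2) (Fin m2) K)
    (ha1 : (Matrix.fromCols H11 H12).rank = n1)
    (ha2 : (Matrix.fromCols H21 H22).rank = n2)
    (ha3 : (Matrix.fromRows H11 H21).rank = m1)
    (ha4 : (Matrix.fromRows H12 H22).rank = m2)
    (R1 R2 : ℝ) (hR1 : 0 ≤ R1) (hR2 : 0 ≤ R2)
    (h1 : R1 ≤ (n1 : ℝ) - (H12.rank : ℝ))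
    (h2 : R2 ≤ (n2 : ℝ) - (H21.rank : ℝ)) :
    R1 ≤ (H11.rank : ℝ) ∧ R2 ≤ (H22.rank : ℝ) ∧
    R1 + R2 ≤ (n1 : ℝ) + (m2 : ℝ) - (H12.rank : ℝ) ∧
    R1 + R2 ≤ (n2 : ℝ) + (m1 : ℝ) - (H21.rank : ℝ) ∧
    R1 + R2 ≤ ((Matrix.fromBlocks H11 H12 H21 (0 : Matrix (Fin n2) (Fin m2) K)).rank : ℝ) +
      ((Matrix.fromBlocks H21 H22 (0 : Matrix (Fin n1) (Fin m1) K) H12).rank : ℝ) -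
      (H12.rank : ℝ) - (H21.rank : ℝ) ∧
    2 * R1 + R2 ≤ (n1 : ℝ) + (m1 : ℝ) +
      ((Matrix.fromBlocks H21 H22 (0 : Matrix (Fin n1) (Fin m1) K) H12).rank : ℝ) -
      (H12.rank : ℝ) - (H21.rank : ℝ) ∧
    R1 + 2 * R2 ≤ (n2 : ℝ) + (m2 : ℝ) +
      ((Matrix.fromBlocks H11 H12 H21 (0 : Matrix (Fin n2) (Fin m2) K)).rank : ℝ) -
      (H12.rank : ℝ) - (H21.rank : ℝ) := by
  have f1 : n1 ≤ H11.rank + H12.rank := ha1.symm.le.trans (rank_fromColumns_le_add H11 H12)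
  have f2 : n2 ≤ H21.rank + H22.rank := ha2.symm.le.trans (rank_fromColumns_le_add H21 H22)
  have f3 : H11.rank ≤ m1 := rank_le_width H11
  have f4 : H22.rank ≤ m2 := rank_le_width H22
  have f5 : n1 ≤ (Matrix.fromBlocks H11 H12 H21 (0 : Matrix (Fin n2) (Fin m2) K)).rank := by
    have h := rank_top_le_fromRows (fromCols H11 H12)
      (fromCols H21 (0 : Matrix (Fin n2) (Fin m2) K))
    rwa [fromRows_fromCols_eq_fromBlocks, ha1] at h
  have f6 : n2 ≤ (Matrix.fromBlocks H21 H22 (0 : Matrix (Fin n1) (Fin m1) K) H12).rank := by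
    have h := rank_top_le_fromRows (fromCols H21 H22)
      (fromCols (0 : Matrix (Fin n1) (Fin m1) K) H12)
    rwa [fromRows_fromCols_eq_fromBlocks, ha2] at h
  have c1 : (n1 : ℝ) ≤ (H11.rank : ℝ) + (H12.rank : ℝ) := by exact_mod_cast f1
  have c2 : (n2 : ℝ) ≤ (H21.rank : ℝ) + (H22.rank : ℝ) := by exact_mod_cast f2
  have c3 : (H11.rank : ℝ) ≤ m1 := by exact_mod_cast f3
  have c4 : (H22.rank : ℝ) ≤ m2 := by exact_mod_cast f4
  have c5 : (n1 : ℝ) ≤ ((Matrix.fromBlocks H11 H12 H21 (0 : Matrix (Fin n2) (Fin m2) K)).rank : ℝ) := by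
    exact_mod_cast f5
  have c6 : (n2 : ℝ) ≤ ((Matrix.fromBlocks H21 H22 (0 : Matrix (Fin n1) (Fin m1) K) H12).rank : ℝ) := by
    exact_mod_cast f6
  refine ⟨by linarith, by linarith, by linarith, by linarith, by linarith, by linarith, by linarith⟩
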